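/- The stock-out free set is monotone in inventory and antitone in demand and backlog: if (v,b) ∈ Q(D), v' ≥ v componentwise, b' ≤ b componentwise, and D' ≤ D componentwise, then (v',b') ∈ Q(D'). -/

import Mathlib

open Finset

/-- The stock-out free set `Q(D)`: `(v, b) ∈ Q(D)` iff `v, b ≥ 0` and there exist
substitution amounts `s j k ≥ 0` (supported on `j ∈ Km k`, where `Km k` is the set of
products whose inventory can fulfill demand of product `k`) with
`∑ j, s j k = D k + b k` for all `k` and `∑ j, s k j ≤ v k` for all `k`. -/
def StockoutFree {ι : Type*} [Fintype ι] (Km : ι → Finset ι) (D v b : ι → ℝ) : Prop :=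
  (∀ k, 0 ≤ v k) ∧ (∀ k, 0 ≤ b k) ∧
  ∃ s : ι → ι → ℝ,
    (∀ j k, 0 ≤ s j k) ∧ (∀ j k, j ∉ Km k → s j k = 0) ∧
    (∀ k, ∑ j, s j k = D k + b k) ∧
    (∀ k, ∑ j, s k j ≤ v k)

/-- Monotonicity of the stock-out free set: more inventory, less backlog and less
demand preserve membership. -/
theorem stockoutFree_mono {ι : Type*} [Fintype ι] (Km : ι → Finset ι)
    (D D' v v' b b' : ι → ℝ)
    (hQ : StockoutFree Km D v b)
    (hvv' : ∀ k, v k ≤ v' k)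
    (hb'0 : ∀ k, 0 ≤ b' k) (hb'b : ∀ k, b' k ≤ b k)
    (hD'0 : ∀ k, 0 ≤ D' k) (hD'D : ∀ k, D' k ≤ D k) :
    StockoutFree Km D' v' b' := by
  obtain ⟨hv0, hb0, s, hs0, hsupp, hcol, hrow⟩ := hQ
  set c : ι → ℝ := fun k => (D' k + b' k) / (D k + b k) with hc
  have hnum : ∀ k, 0 ≤ D' k + b' k := fun k => add_nonneg (hD'0 k) (hb'0 k)
  have hle : ∀ k, D' k + b' k ≤ D k + b k := fun k => add_le_add (hD'D k) (hb'b k)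
  have hc0 : ∀ k, 0 ≤ c k := fun k =>
    div_nonneg (hnum k) (le_trans (hnum k) (hle k))
  have hc1 : ∀ k, c k ≤ 1 := by
    intro k
    rcases eq_or_lt_of_le (le_trans (hnum k) (hle k)) with h | h
    · simp [hc, ← h]
    · exact div_le_one_of_le₀ (hle k) h.le
  have hcmul : ∀ k, c k * (D k + b k) = D' k + b' k := by
    intro k
    rcases eq_or_lt_of_le (le_trans (hnum k) (hle k)) with h | h
    · have h2 : D' k + b' k = 0 := le_antisymm (h ▸ hle k) (hnum k)
      simp [h2, ← h]
    · exact div_mul_cancel₀ _ h.ne'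
  refine ⟨fun k => le_trans (hv0 k) (hvv' k), hb'0, fun j k => c k * s j k,
    fun j k => mul_nonneg (hc0 k) (hs0 j k),
    fun j k h => by simp [hsupp j k h], ?_, ?_⟩
  · intro k
    rw [← Finset.mul_sum, hcol k, hcmul k]
  · intro k
    calc ∑ j, c j * s k j ≤ ∑ j, s k j := by
          apply Finset.sum_le_sum
          intro j _
          calc c j * s k j ≤ 1 * s k j := mul_le_mul_of_nonneg_right (hc1 j) (hs0 k j)
            _ = s k j := one_mul _
      _ ≤ v k := hrow k
      _ ≤ v' k := hvv' k
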